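/- arXiv:2001.02177 — 2 statements merged into one kernel-verified Lean document; each statement's English description precedes it below -/
import Mathlib

section
/- Let R = ℂ[X, Y, Y⁻¹] be the ring of polynomials in X and Laurent polynomials in Y over ℂ, equipped with the Poisson bracket {f, g} = Y·(∂_X f·∂_Y g − ∂_Y f·∂_X g). Let S ⊆ R be the ℂ-linear span of the monomials XᵏYᵐ with k ≥ 0 an integer and m an integer satisfying −k ≤ m ≤ k. Then: (i) S equals the ℂ-subalgebra of R generated by the three elements X, XY, and XY⁻¹; and (ii) S is closed under the Poisson bracket, i.e. {f, g} ∈ S for all f, g ∈ S. -/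
noncomputable section

/-- The ring `ℂ[X, Y, Y⁻¹]` of polynomials in `X` and Laurent polynomials in `Y`,
realized as the monoid algebra of `ℕ × ℤ` over `ℂ`:
the monomial `Xᵏ Yᵐ` corresponds to `single (k, m) 1`. -/
abbrev CylRing : Type := AddMonoidAlgebra ℂ (ℕ × ℤ)

namespace CylRing

/-- The partial derivative `∂_X`, defined on monomials by `∂_X (Xᵏ Yᵐ) = k·X^{k-1} Yᵐ`. -/
def dX (f : CylRing) : CylRing :=
  Finsupp.sum f.coeff fun p c => AddMonoidAlgebra.single (p.1 - 1, p.2) ((p.1 : ℂ) * c)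

/-- The operator `Y·∂_Y`, defined on monomials by `Y ∂_Y (Xᵏ Yᵐ) = m·Xᵏ Yᵐ`. -/
def YdY (f : CylRing) : CylRing :=
  Finsupp.sum f.coeff fun p c => AddMonoidAlgebra.single p ((p.2 : ℂ) * c)

/-- The Poisson bracket `{f, g} = Y·(∂_X f·∂_Y g − ∂_Y f·∂_X g)`
associated to the symplectic form `dX ∧ Y⁻¹ dY` on the holomorphic cylinder. -/
def bracket (f g : CylRing) : CylRing := dX f * YdY g - YdY f * dX g

/-- The `ℂ`-linear span of the monomials `Xᵏ Yᵐ` with `k ∈ ℕ`, `m ∈ ℤ`, `−k ≤ m ≤ k`.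
These are the Hamiltonians of the global symmetry subalgebra of `W_∞`. -/
def globalSpan : Submodule ℂ CylRing :=
  Submodule.span ℂ
    {f : CylRing | ∃ (k : ℕ) (m : ℤ), -(k : ℤ) ≤ m ∧ m ≤ (k : ℤ) ∧
      f = AddMonoidAlgebra.single (k, m) 1}

end CylRing

namespace CylRing

open AddMonoidAlgebra

lemma dX_single (p : ℕ × ℤ) (c : ℂ) :
    dX (AddMonoidAlgebra.single p c)
      = AddMonoidAlgebra.single (p.1 - 1, p.2) ((p.1 : ℂ) * c) := by
  classical
  rw [dX]; exact Finsupp.sum_single_index (by simp)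

lemma YdY_single (p : ℕ × ℤ) (c : ℂ) :
    YdY (AddMonoidAlgebra.single p c) = AddMonoidAlgebra.single p ((p.2 : ℂ) * c) := by
  classical
  rw [YdY]; exact Finsupp.sum_single_index (by simp)

lemma dX_zero : dX (0 : CylRing) = 0 := by
  classical
  simp [dX]

lemma YdY_zero : YdY (0 : CylRing) = 0 := by
  classical
  simp [YdY]

lemma dX_add (f g : CylRing) : dX (f + g) = dX f + dX g := by
  classical
  exact Finsupp.sum_add_index (by simp) (by intro p _ c d; simp [mul_add, AddMonoidAlgebra.single_add])

lemma YdY_add (f g : CylRing) : YdY (f + g) = YdY f + YdY g := by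
  classical
  exact Finsupp.sum_add_index (by simp) (by intro p _ c d; simp [mul_add, AddMonoidAlgebra.single_add])

lemma dX_smul (c : ℂ) (f : CylRing) : dX (c • f) = c • dX f := by
  classical
  rw [dX, dX, AddMonoidAlgebra.coeff_smul, Finsupp.smul_sum, Finsupp.sum_smul_index (by simp)]
  refine Finsupp.sum_congr fun p _ => ?_
  rw [AddMonoidAlgebra.smul_single, smul_eq_mul]
  congr 1
  ring

lemma YdY_smul (c : ℂ) (f : CylRing) : YdY (c • f) = c • YdY f := by
  classical
  rw [YdY, YdY, AddMonoidAlgebra.coeff_smul, Finsupp.smul_sum, Finsupp.sum_smul_index (by simp)]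
  refine Finsupp.sum_congr fun p _ => ?_
  rw [AddMonoidAlgebra.smul_single, smul_eq_mul]
  congr 1
  ring

lemma bracket_add_left (f₁ f₂ g : CylRing) :
    bracket (f₁ + f₂) g = bracket f₁ g + bracket f₂ g := by
  simp only [bracket, dX_add, YdY_add, add_mul]; ring

lemma bracket_add_right (f g₁ g₂ : CylRing) :
    bracket f (g₁ + g₂) = bracket f g₁ + bracket f g₂ := by
  simp only [bracket, dX_add, YdY_add, mul_add]; ring

lemma bracket_smul_left (c : ℂ) (f g : CylRing) :
    bracket (c • f) g = c • bracket f g := by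
  simp only [bracket, dX_smul, YdY_smul, smul_mul_assoc, smul_sub]

lemma bracket_smul_right (c : ℂ) (f g : CylRing) :
    bracket f (c • g) = c • bracket f g := by
  simp only [bracket, dX_smul, YdY_smul, mul_smul_comm, smul_sub]

lemma bracket_zero_left (g : CylRing) : bracket 0 g = 0 := by
  simp [bracket, dX_zero, YdY_zero]

lemma bracket_zero_right (f : CylRing) : bracket f 0 = 0 := by
  simp [bracket, dX_zero, YdY_zero]

lemma single_mem_globalSpan {k : ℕ} {m : ℤ} (c : ℂ)
    (h₁ : -(k : ℤ) ≤ m) (h₂ : m ≤ (k : ℤ)) :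
    AddMonoidAlgebra.single (k, m) c ∈ globalSpan := by
  have : AddMonoidAlgebra.single (k, m) c = c • AddMonoidAlgebra.single (k, m) (1 : ℂ) := by
    rw [AddMonoidAlgebra.smul_single, smul_eq_mul, mul_one]
  rw [this]
  exact Submodule.smul_mem _ _ (Submodule.subset_span ⟨k, m, h₁, h₂, rfl⟩)

lemma bracket_single_single {k l : ℕ} {m n : ℤ}
    (hm₁ : -(k : ℤ) ≤ m) (hm₂ : m ≤ (k : ℤ)) (hn₁ : -(l : ℤ) ≤ n) (hn₂ : n ≤ (l : ℤ)) :
    bracket (AddMonoidAlgebra.single (k, m) (1 : ℂ))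
      (AddMonoidAlgebra.single (l, n) (1 : ℂ)) ∈ globalSpan := by
  classical
  rw [bracket, dX_single, YdY_single, dX_single, YdY_single]
  simp only [AddMonoidAlgebra.single_mul_single, Prod.mk_add_mk]
  rcases Nat.eq_zero_or_pos k with hk | hk
  · subst hk
    have hm : m = 0 := by omega
    subst hm
    simp
  rcases Nat.eq_zero_or_pos l with hl | hl
  · subst hl
    have hn : n = 0 := by omega
    subst hn
    simp
  have he : k - 1 + l = k + (l - 1) := by omega
  have hcoef : ((k : ℂ) * 1 * ((n : ℂ) * 1)) = (k : ℂ) * n := by ring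
  have hcoef' : ((m : ℂ) * 1 * ((l : ℂ) * 1)) = (m : ℂ) * l := by ring
  rw [he, hcoef, hcoef', ← AddMonoidAlgebra.single_sub]
  have hsub : (k : ℂ) * n - (m : ℂ) * l = (((k : ℤ) * n - m * l : ℤ) : ℂ) := by
    push_cast; ring
  rw [hsub]
  by_cases hz : (k : ℤ) * n - m * l = 0
  · rw [hz]; simp
  · apply single_mem_globalSpan
    · -- -(k + (l-1)) ≤ m + n
      by_contra hlt
      push_neg at hlt
      have h1 : m = -(k : ℤ) := by omega
      have h2 : n = -(l : ℤ) := by omega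
      apply hz; rw [h1, h2]; ring
    · by_contra hlt
      push_neg at hlt
      have h1 : m = (k : ℤ) := by omega
      have h2 : n = (l : ℤ) := by omega
      apply hz; rw [h1, h2]; ring

end CylRing

namespace CylRing

lemma mul_mem_globalSpan {f g : CylRing} (hf : f ∈ globalSpan) (hg : g ∈ globalSpan) :
    f * g ∈ globalSpan := by
  induction hf using Submodule.span_induction generalizing g with
  | mem x hx =>
    induction hg using Submodule.span_induction with
    | mem y hy =>
      obtain ⟨k, m, hm₁, hm₂, rfl⟩ := hx
      obtain ⟨l, n, hn₁, hn₂, rfl⟩ := hy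
      rw [AddMonoidAlgebra.single_mul_single]
      have : ((k, m) : ℕ × ℤ) + (l, n) = (k + l, m + n) := rfl
      rw [this, one_mul]
      refine single_mem_globalSpan 1 ?_ ?_ <;> push_cast <;> omega
    | zero => simp
    | add a b _ _ ha hb => rw [mul_add]; exact Submodule.add_mem _ ha hb
    | smul c a _ ha => rw [mul_smul_comm]; exact Submodule.smul_mem _ _ ha
  | zero => simp
  | add a b _ _ ha hb => rw [add_mul]; exact Submodule.add_mem _ (ha hg) (hb hg)
  | smul c a _ ha => rw [smul_mul_assoc]; exact Submodule.smul_mem _ _ (ha hg)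

lemma one_mem_globalSpan : (1 : CylRing) ∈ globalSpan := by
  have h1 : (1 : CylRing) = AddMonoidAlgebra.single ((0 : ℕ), (0 : ℤ)) (1 : ℂ) := rfl
  rw [h1]
  exact single_mem_globalSpan 1 (by simp) (by simp)

/-- `globalSpan` as a subalgebra. -/
def globalSubalgebra : Subalgebra ℂ CylRing where
  carrier := globalSpan
  mul_mem' := mul_mem_globalSpan
  add_mem' := Submodule.add_mem _
  one_mem' := one_mem_globalSpan
  zero_mem' := Submodule.zero_mem _
  algebraMap_mem' := fun c => by
    have : (algebraMap ℂ CylRing) c = c • (1 : CylRing) := Algebra.algebraMap_eq_smul_one c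
    rw [this]
    exact Submodule.smul_mem _ _ one_mem_globalSpan

theorem globalSpan_eq_adjoin :
    globalSpan =
      Subalgebra.toSubmodule
        (Algebra.adjoin ℂ
          ({AddMonoidAlgebra.single (1, 0) 1, AddMonoidAlgebra.single (1, 1) 1,
            AddMonoidAlgebra.single (1, -1) 1} : Set CylRing)) := by
  apply le_antisymm
  · rw [globalSpan, Submodule.span_le]
    rintro f ⟨k, m, hm₁, hm₂, rfl⟩
    set A := Algebra.adjoin ℂ
      ({AddMonoidAlgebra.single (1, 0) 1, AddMonoidAlgebra.single (1, 1) 1,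
        AddMonoidAlgebra.single (1, -1) 1} : Set CylRing)
    show AddMonoidAlgebra.single ((k : ℕ), m) (1 : ℂ) ∈ A
    have hX : AddMonoidAlgebra.single ((1 : ℕ), (0 : ℤ)) (1 : ℂ) ∈ A :=
      Algebra.subset_adjoin (by simp)
    have hXY : AddMonoidAlgebra.single ((1 : ℕ), (1 : ℤ)) (1 : ℂ) ∈ A :=
      Algebra.subset_adjoin (by simp)
    have hXY' : AddMonoidAlgebra.single ((1 : ℕ), (-1 : ℤ)) (1 : ℂ) ∈ A :=
      Algebra.subset_adjoin (by simp)
    set a : ℕ := m.toNat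
    set b : ℕ := (-m).toNat
    have hab : (a : ℤ) - b = m := by omega
    have habs : a + b = m.natAbs := by omega
    have hle : a + b ≤ k := by omega
    have key : AddMonoidAlgebra.single ((k : ℕ), m) (1 : ℂ) =
        (AddMonoidAlgebra.single ((1 : ℕ), (0 : ℤ)) (1 : ℂ)) ^ (k - (a + b)) *
        (AddMonoidAlgebra.single ((1 : ℕ), (1 : ℤ)) (1 : ℂ)) ^ a *
        (AddMonoidAlgebra.single ((1 : ℕ), (-1 : ℤ)) (1 : ℂ)) ^ b := by
      rw [AddMonoidAlgebra.single_pow, AddMonoidAlgebra.single_pow,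
        AddMonoidAlgebra.single_pow, AddMonoidAlgebra.single_mul_single,
        AddMonoidAlgebra.single_mul_single]
      have hpt : (k - (a + b)) • ((1 : ℕ), (0 : ℤ)) + a • ((1 : ℕ), (1 : ℤ))
          + b • ((1 : ℕ), (-1 : ℤ)) = ((k : ℕ), m) := by
        simp only [Prod.smul_mk, Prod.mk_add_mk, Prod.mk.injEq, smul_eq_mul, nsmul_eq_mul,
          mul_one, mul_zero, mul_neg, smul_zero, zero_add, add_zero]
        constructor <;> omega
      rw [hpt]
      norm_num
    rw [key]
    exact mul_mem (mul_mem (pow_mem hX _) (pow_mem hXY _)) (pow_mem hXY' _)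
  · have : Algebra.adjoin ℂ
        ({AddMonoidAlgebra.single (1, 0) 1, AddMonoidAlgebra.single (1, 1) 1,
          AddMonoidAlgebra.single (1, -1) 1} : Set CylRing) ≤ globalSubalgebra := by
      apply Algebra.adjoin_le
      rintro f (rfl | rfl | rfl)
      · exact single_mem_globalSpan 1 (by norm_num) (by norm_num)
      · exact single_mem_globalSpan 1 (by norm_num) (by norm_num)
      · exact single_mem_globalSpan 1 (by norm_num) (by norm_num)
    exact this

theorem bracket_closed {f g : CylRing} (hf : f ∈ globalSpan) (hg : g ∈ globalSpan) :
    bracket f g ∈ globalSpan := by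
  induction hf using Submodule.span_induction generalizing g with
  | mem x hx =>
    induction hg using Submodule.span_induction with
    | mem y hy =>
      obtain ⟨k, m, hm₁, hm₂, rfl⟩ := hx
      obtain ⟨l, n, hn₁, hn₂, rfl⟩ := hy
      exact bracket_single_single hm₁ hm₂ hn₁ hn₂
    | zero => rw [bracket_zero_right]; exact Submodule.zero_mem _
    | add a b _ _ ha hb => rw [bracket_add_right]; exact Submodule.add_mem _ ha hb
    | smul c a _ ha => rw [bracket_smul_right]; exact Submodule.smul_mem _ _ ha
  | zero => rw [bracket_zero_left]; exact Submodule.zero_mem _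
  | add a b _ _ ha hb => rw [bracket_add_left]; exact Submodule.add_mem _ (ha hg) (hb hg)
  | smul c a _ ha => rw [bracket_smul_left]; exact Submodule.smul_mem _ _ (ha hg)

end CylRing

open CylRing

/-- The span `S` of the monomials `Xᵏ Yᵐ` with `|m| ≤ k` equals the `ℂ`-subalgebra of
`ℂ[X, Y, Y⁻¹]` generated by `X`, `XY` and `XY⁻¹`, and `S` is closed under the Poisson
bracket `{f, g} = Y (∂_X f ∂_Y g − ∂_Y f ∂_X g)`. -/
theorem globalSpan_eq_adjoin_and_bracket_closed :
    globalSpan =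
      Subalgebra.toSubmodule
        (Algebra.adjoin ℂ
          ({AddMonoidAlgebra.single (1, 0) 1, AddMonoidAlgebra.single (1, 1) 1,
            AddMonoidAlgebra.single (1, -1) 1} : Set CylRing)) ∧
    ∀ f g : CylRing, f ∈ globalSpan → g ∈ globalSpan → bracket f g ∈ globalSpan :=
  ⟨CylRing.globalSpan_eq_adjoin, fun _ _ hf hg => CylRing.bracket_closed hf hg⟩
end
end

section
/- Fix N ∈ ℂ. Let R = ℂ[u₁, u₂, w₁, w₂]/(u₁w₂ − u₂w₁ − N) and let φ : ℂ[A, B, C] → R be the ℂ-algebra homomorphism with φ(A) = (u₁w₂ + u₂w₁)/2, φ(B) = w₁w₂, φ(C) = u₁u₂. Then: (i) the kernel of φ is the principal ideal generated by A² − BC − N²/4; and (ii) the image of φ is exactly the set of elements of R fixed by every ℂ-algebra automorphism σ_t (t ∈ ℂ, t ≠ 0), where σ_t is induced by u₁ ↦ t·u₁, w₁ ↦ t·w₁, u₂ ↦ t⁻¹·u₂, w₂ ↦ t⁻¹·w₂ (these assignments preserve the relation u₁w₂ − u₂w₁ − N, so σ_t is well defined). -/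
noncomputable section

open MvPolynomial

/-- The defining relation `u₁w₂ − u₂w₁ − N` of the deformed conifold, in
`ℂ[u₁, u₂, w₁, w₂] = MvPolynomial (Fin 4) ℂ` with `u₁ = X 0`, `u₂ = X 1`,
`w₁ = X 2`, `w₂ = X 3`. -/
def conifoldRel (N : ℂ) : MvPolynomial (Fin 4) ℂ := X 0 * X 3 - X 1 * X 2 - C N

/-- The ideal generated by the deformed conifold relation. -/
def conifoldIdeal (N : ℂ) : Ideal (MvPolynomial (Fin 4) ℂ) := Ideal.span {conifoldRel N}

/-- The coordinate ring `R = ℂ[u₁, u₂, w₁, w₂]/(u₁w₂ − u₂w₁ − N)` of the deformed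
conifold. -/
abbrev ConifoldRing (N : ℂ) : Type := MvPolynomial (Fin 4) ℂ ⧸ conifoldIdeal N

/-- The quotient map onto the coordinate ring of the deformed conifold. -/
def conifoldMk (N : ℂ) : MvPolynomial (Fin 4) ℂ →ₐ[ℂ] ConifoldRing N :=
  Ideal.Quotient.mkₐ ℂ (conifoldIdeal N)

/-- The `ℂ`-algebra homomorphism `φ : ℂ[A, B, C] → R` with
`φ(A) = (u₁w₂ + u₂w₁)/2`, `φ(B) = w₁w₂`, `φ(C) = u₁u₂`. -/
def phiConifold (N : ℂ) : MvPolynomial (Fin 3) ℂ →ₐ[ℂ] ConifoldRing N :=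
  aeval
    ![conifoldMk N (C (2⁻¹ : ℂ) * (X 0 * X 3 + X 1 * X 2)),
      conifoldMk N (X 2 * X 3), conifoldMk N (X 0 * X 1)]

/-- The rescaling `u₁ ↦ t·u₁, u₂ ↦ t⁻¹·u₂, w₁ ↦ t·w₁, w₂ ↦ t⁻¹·w₂` on the polynomial
ring, for an invertible scalar `t`. -/
def tauScale (t : ℂˣ) : MvPolynomial (Fin 4) ℂ →ₐ[ℂ] MvPolynomial (Fin 4) ℂ :=
  aeval ![C (t : ℂ) * X 0, C ((t⁻¹ : ℂˣ) : ℂ) * X 1, C (t : ℂ) * X 2,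
    C ((t⁻¹ : ℂˣ) : ℂ) * X 3]

lemma tauScale_rel (N : ℂ) (t : ℂˣ) : tauScale t (conifoldRel N) = conifoldRel N := by
  have h : (C ((t : ℂ)) * C (((t⁻¹ : ℂˣ) : ℂ)) : MvPolynomial (Fin 4) ℂ) = 1 := by
    rw [← C_mul, Units.mul_inv, C_1]
  simp only [tauScale, conifoldRel, map_sub, map_mul, aeval_X, aeval_C, algebraMap_eq,
    Matrix.cons_val_zero, Matrix.cons_val_one, Matrix.head_cons, Matrix.cons_val_two,
    Matrix.tail_cons, Matrix.cons_val_three]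
  linear_combination (X 0 * X 3 - X 1 * X 2 : MvPolynomial (Fin 4) ℂ) * h

/-- The rescaling automorphism `σ_t` of the coordinate ring of the deformed conifold,
induced by `u₁ ↦ t·u₁, u₂ ↦ t⁻¹·u₂, w₁ ↦ t·w₁, w₂ ↦ t⁻¹·w₂` (these assignments
preserve the relation `u₁w₂ − u₂w₁ − N`, so `σ_t` is well defined). -/
def sigmaScale (N : ℂ) (t : ℂˣ) : ConifoldRing N →ₐ[ℂ] ConifoldRing N :=
  Ideal.Quotient.liftₐ (conifoldIdeal N) ((conifoldMk N).comp (tauScale t)) (by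
    intro a ha
    rw [AlgHom.comp_apply, conifoldMk, Ideal.Quotient.mkₐ_eq_mk,
      Ideal.Quotient.eq_zero_iff_mem]
    rw [conifoldIdeal, Ideal.mem_span_singleton] at ha ⊢
    obtain ⟨q, rfl⟩ := ha
    rw [map_mul, tauScale_rel]
    exact Dvd.intro _ rfl)

/-! ### Auxiliary material -/

namespace ConifoldAux

abbrev P4 : Type := MvPolynomial (Fin 4) ℂ

/-- The weights of the `ℂˣ`-action. -/
def wgt : Fin 4 → ℤ := ![1, -1, 1, -1]

lemma zpow_fsum {α : Type*} (t : ℂˣ) (s : Finset α) (f : α → ℤ) :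
    t ^ (∑ i ∈ s, f i) = ∏ i ∈ s, t ^ f i := by
  classical
  induction s using Finset.induction_on with
  | empty => simp
  | insert _ _ h ih =>
      rw [Finset.sum_insert h, Finset.prod_insert h, zpow_add, ih]

lemma weight_eq (m : Fin 4 →₀ ℕ) :
    Finsupp.weight wgt m
      = (m 0 : ℤ) + (m 2 : ℤ) - (m 1 : ℤ) - (m 3 : ℤ) := by
  rw [Finsupp.weight_apply, Finsupp.sum_fintype _ _ (fun i => by simp)]
  simp [Fin.sum_univ_four, wgt]
  ring

lemma tauScale_monomial (t : ℂˣ) (m : Fin 4 →₀ ℕ) (a : ℂ) :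
    tauScale t (monomial m a)
      = C ((t ^ (Finsupp.weight wgt m) : ℂˣ) : ℂ) * monomial m a := by
  classical
  have hv : ∀ i : Fin 4,
      (![C (t : ℂ) * X 0, C ((t⁻¹ : ℂˣ) : ℂ) * X 1, C (t : ℂ) * X 2,
        C ((t⁻¹ : ℂˣ) : ℂ) * X 3] : Fin 4 → P4) i
        = C (((t ^ wgt i : ℂˣ)) : ℂ) * X i := by
    intro i
    fin_cases i <;> simp [wgt]
  rw [tauScale, aeval_monomial]
  have : (Finsupp.prod m fun i k =>
      (![C (t : ℂ) * X 0, C ((t⁻¹ : ℂˣ) : ℂ) * X 1, C (t : ℂ) * X 2,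
        C ((t⁻¹ : ℂˣ) : ℂ) * X 3] : Fin 4 → P4) i ^ k)
      = C ((t ^ (Finsupp.weight wgt m) : ℂˣ) : ℂ)
        * Finsupp.prod m fun i k => (X i : P4) ^ k := by
    rw [Finsupp.prod, Finsupp.prod]
    have : ∀ i ∈ m.support,
        (![C (t : ℂ) * X 0, C ((t⁻¹ : ℂˣ) : ℂ) * X 1, C (t : ℂ) * X 2,
          C ((t⁻¹ : ℂˣ) : ℂ) * X 3] : Fin 4 → P4) i ^ m i
          = C (((t ^ (m i • wgt i) : ℂˣ)) : ℂ) * (X i : P4) ^ m i := by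
      intro i _
      rw [hv i, mul_pow, ← C_pow, ← Units.val_pow_eq_pow_val]
      congr 2
      rw [← zpow_natCast, ← zpow_mul]
      congr 1
      rw [nsmul_eq_mul, mul_comm]
    have hcoe : (∏ x ∈ m.support, ((t ^ (m x • wgt x) : ℂˣ) : ℂ))
        = (((∏ x ∈ m.support, t ^ (m x • wgt x) : ℂˣ)) : ℂ) := by
      rw [← Units.coeHom_apply, map_prod]
      rfl
    rw [Finset.prod_congr rfl this, Finset.prod_mul_distrib]
    congr 1
    rw [← map_prod, hcoe, ← zpow_fsum]
    congr 2
  rw [this, monomial_eq, algebraMap_eq]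
  ring

lemma tauScale_homog {q : P4} {d : ℤ} (h : IsWeightedHomogeneous wgt q d) (t : ℂˣ) :
    tauScale t q = C ((t ^ d : ℂˣ) : ℂ) * q := by
  conv_lhs => rw [q.as_sum]
  conv_rhs => rw [q.as_sum]
  rw [map_sum, Finset.mul_sum]
  refine Finset.sum_congr rfl fun m hm => ?_
  rw [tauScale_monomial, h (mem_support_iff.mp hm)]

lemma comp_tauScale (t : ℂˣ) (p : P4) (d : ℤ) :
    weightedHomogeneousComponent wgt d (tauScale t p)
      = C ((t ^ d : ℂˣ) : ℂ) * weightedHomogeneousComponent wgt d p := by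
  classical
  have hfin := weightedHomogeneousComponent_finsupp (w := wgt) (φ := p)
  set s : Finset ℤ := hfin.toFinset with hs
  have hp : p = ∑ e ∈ s, weightedHomogeneousComponent wgt e p := by
    rw [← finsum_eq_sum _ hfin, sum_weightedHomogeneousComponent]
  by_cases hd : d ∈ s
  · conv_lhs => rw [hp]
    rw [map_sum, map_sum]
    have : ∀ e ∈ s,
        weightedHomogeneousComponent wgt d
          (tauScale t (weightedHomogeneousComponent wgt e p))
          = if e = d then C ((t ^ d : ℂˣ) : ℂ) * weightedHomogeneousComponent wgt d p
            else 0 := by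
      intro e _
      rw [tauScale_homog (weightedHomogeneousComponent_isWeightedHomogeneous e p) t,
        weightedHomogeneousComponent_C_mul]
      by_cases he : e = d
      · subst he
        rw [if_pos rfl,
          (weightedHomogeneousComponent_isWeightedHomogeneous e p).weightedHomogeneousComponent_same]
      · rw [if_neg he,
          (weightedHomogeneousComponent_isWeightedHomogeneous e p).weightedHomogeneousComponent_ne d
            (Ne.symm he), mul_zero]
    rw [Finset.sum_congr rfl this, Finset.sum_ite_eq' s d
      (fun _ => C ((t ^ d : ℂˣ) : ℂ) * weightedHomogeneousComponent wgt d p), if_pos hd]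
  · have h0 : weightedHomogeneousComponent wgt d p = 0 := by
      have := hfin.mem_toFinset.not.mp hd
      simpa [Function.mem_support] using this
    conv_lhs => rw [hp]
    rw [map_sum, map_sum]
    have : ∀ e ∈ s,
        weightedHomogeneousComponent wgt d
          (tauScale t (weightedHomogeneousComponent wgt e p)) = 0 := by
      intro e he
      rw [tauScale_homog (weightedHomogeneousComponent_isWeightedHomogeneous e p) t,
        weightedHomogeneousComponent_C_mul]
      by_cases hed : e = d
      · subst hed; rw [h0, map_zero, mul_zero]
      · rw [(weightedHomogeneousComponent_isWeightedHomogeneous e p).weightedHomogeneousComponent_ne d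
          (Ne.symm hed), mul_zero]
    rw [Finset.sum_congr rfl this, Finset.sum_const_zero, h0, mul_zero]

lemma rel_homog (N : ℂ) : IsWeightedHomogeneous wgt (conifoldRel N) 0 := by
  have h03 : IsWeightedHomogeneous wgt ((X 0 : P4) * X 3) 0 := by
    have := (isWeightedHomogeneous_X ℂ wgt 0).mul (isWeightedHomogeneous_X ℂ wgt 3)
    convert this using 1
    simp [wgt]
  have h12 : IsWeightedHomogeneous wgt ((X 1 : P4) * X 2) 0 := by
    have := (isWeightedHomogeneous_X ℂ wgt 1).mul (isWeightedHomogeneous_X ℂ wgt 2)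
    convert this using 1
    simp [wgt]
  have hC : IsWeightedHomogeneous wgt (C N : P4) 0 := isWeightedHomogeneous_C wgt N
  rw [conifoldRel]
  rw [← mem_weightedHomogeneousSubmodule] at h03 h12 hC ⊢
  exact sub_mem (sub_mem h03 h12) hC

lemma comp_mem_ideal (N : ℂ) {q : P4} (hq : q ∈ conifoldIdeal N) (d : ℤ) :
    weightedHomogeneousComponent wgt d q ∈ conifoldIdeal N := by
  classical
  rw [conifoldIdeal, Ideal.mem_span_singleton] at hq
  obtain ⟨h, rfl⟩ := hq
  have key : ∀ h : P4, weightedHomogeneousComponent wgt d (conifoldRel N * h)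
      = conifoldRel N * weightedHomogeneousComponent wgt d h := by
    intro h
    induction h using MvPolynomial.induction_on' with
    | monomial m a =>
        have hhom : IsWeightedHomogeneous wgt (conifoldRel N * monomial m a)
            (Finsupp.weight wgt m) := by
          have := (rel_homog N).mul
            (isWeightedHomogeneous_monomial wgt m a rfl)
          simpa using this
        by_cases hd : Finsupp.weight wgt m = d
        · subst hd
          rw [hhom.weightedHomogeneousComponent_same,
            (isWeightedHomogeneous_monomial wgt m a rfl).weightedHomogeneousComponent_same]
        · rw [hhom.weightedHomogeneousComponent_ne d (fun hh => hd hh.symm),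
            (isWeightedHomogeneous_monomial wgt m a rfl).weightedHomogeneousComponent_ne d
              (fun hh => hd hh.symm), mul_zero]
    | add p q hp hq =>
        rw [mul_add, map_add, hp, hq, map_add, mul_add]
  rw [key, conifoldIdeal, Ideal.mem_span_singleton]
  exact Dvd.intro _ rfl

lemma two_zpow_ne_one {d : ℤ} (hd : d ≠ 0) :
    ((Units.mk0 (2 : ℂ) two_ne_zero) ^ d : ℂˣ) ≠ 1 := by
  intro h
  have h2 : ((2 : ℂ) ^ d : ℂ) = 1 := by
    have := congrArg (Units.val) h
    simpa using this
  have habs : ((2 : ℝ) ^ d : ℝ) = 1 := by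
    have := congrArg Norm.norm h2
    rw [norm_zpow] at this
    simpa using this
  have : d = 0 := by
    have hinj := zpow_right_injective₀ (a := (2:ℝ)) (by norm_num) (by norm_num)
    have : (2:ℝ) ^ d = (2:ℝ) ^ (0:ℤ) := by simpa using habs
    exact hinj this
  exact hd this


/-! ### Part (i): kernel computation -/

abbrev P3 : Type := MvPolynomial (Fin 3) ℂ
abbrev P2 : Type := MvPolynomial (Fin 2) ℂ

/-- The inclusion `ℂ[B,C] → ℂ[A,B,C]`. -/
def embA : P2 →ₐ[ℂ] P3 := aeval ![X 1, X 2]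

def gPoly (N : ℂ) : P3 := X 0 ^ 2 - X 1 * X 2 - C (N ^ 2 / 4)

lemma embA_X0 : embA (X 0) = (X 1 : P3) := by simp [embA]
lemma embA_X1 : embA (X 1) = (X 2 : P3) := by simp [embA]

lemma normal_form (N : ℂ) (p : P3) :
    ∃ p₀ p₁ : P2, p - (embA p₀ + X 0 * embA p₁) ∈ Ideal.span {gPoly N} := by
  induction p using MvPolynomial.induction_on with
  | C a =>
      refine ⟨C a, 0, ?_⟩
      have h : (C a : P3) - (embA (C a) + X 0 * embA 0) = 0 := by
        simp [embA]
      rw [h]; exact zero_mem _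
  | add p q hp hq =>
      obtain ⟨p0, p1, hp⟩ := hp
      obtain ⟨q0, q1, hq⟩ := hq
      refine ⟨p0 + q0, p1 + q1, ?_⟩
      have h : p + q - (embA (p0 + q0) + X 0 * embA (p1 + q1))
          = (p - (embA p0 + X 0 * embA p1)) + (q - (embA q0 + X 0 * embA q1)) := by
        rw [map_add, map_add]; ring
      rw [h]; exact add_mem hp hq
  | mul_X p i hp =>
      obtain ⟨p0, p1, hp⟩ := hp
      fin_cases i
      · refine ⟨(X 0 * X 1 + C (N ^ 2 / 4)) * p1, p0, ?_⟩
        show p * X 0 - (embA ((X 0 * X 1 + C (N ^ 2 / 4)) * p1) + X 0 * embA p0)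
          ∈ Ideal.span {gPoly N}
        have he : embA ((X 0 * X 1 + C (N ^ 2 / 4)) * p1)
            = (X 1 * X 2 + C (N ^ 2 / 4)) * embA p1 := by
          rw [map_mul, map_add, map_mul, embA_X0, embA_X1]
          congr 2
          simp [embA, algebraMap_eq]
        have h : p * X 0 - (embA ((X 0 * X 1 + C (N ^ 2 / 4)) * p1) + X 0 * embA p0)
            = (p - (embA p0 + X 0 * embA p1)) * X 0 + gPoly N * embA p1 := by
          rw [he, gPoly]; ring
        rw [h]
        exact add_mem (Ideal.mul_mem_right _ _ hp)
          (Ideal.mul_mem_right _ _ (Ideal.subset_span (Set.mem_singleton _)))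
      · refine ⟨X 0 * p0, X 0 * p1, ?_⟩
        show p * X 1 - (embA (X 0 * p0) + X 0 * embA (X 0 * p1)) ∈ Ideal.span {gPoly N}
        have h : p * X 1 - (embA (X 0 * p0) + X 0 * embA (X 0 * p1))
            = (p - (embA p0 + X 0 * embA p1)) * X 1 := by
          rw [map_mul, map_mul, embA_X0]; ring
        rw [h]; exact Ideal.mul_mem_right _ _ hp
      · refine ⟨X 1 * p0, X 1 * p1, ?_⟩
        show p * X 2 - (embA (X 1 * p0) + X 0 * embA (X 1 * p1)) ∈ Ideal.span {gPoly N}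
        have h : p * X 2 - (embA (X 1 * p0) + X 0 * embA (X 1 * p1))
            = (p - (embA p0 + X 0 * embA p1)) * X 2 := by
          rw [map_mul, map_mul, embA_X1]; ring
        rw [h]; exact Ideal.mul_mem_right _ _ hp

lemma C_half_mul : ((2 : P4)) * C (2⁻¹ : ℂ) = 1 := by
  rw [show ((2 : P4)) = C (2 : ℂ) from (map_ofNat (C : ℂ →+* P4) 2).symm, ← C_mul]
  norm_num

lemma C_quarter_mul : ((4 : P4)) * C (4⁻¹ : ℂ) = 1 := by
  rw [show ((4 : P4)) = C (4 : ℂ) from (map_ofNat (C : ℂ →+* P4) 4).symm, ← C_mul]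
  norm_num

lemma mk_C (N : ℂ) (x : ℂ) :
    Ideal.Quotient.mk (conifoldIdeal N) (C x) = algebraMap ℂ (ConifoldRing N) x := by
  rw [← Ideal.Quotient.mkₐ_eq_mk ℂ, ← algebraMap_eq]
  exact AlgHom.commutes _ x

lemma phi_g (N : ℂ) : phiConifold N (gPoly N) = 0 := by
  have h1 : phiConifold N (gPoly N)
      = conifoldMk N ((C (2⁻¹ : ℂ) * (X 0 * X 3 + X 1 * X 2)) ^ 2
          - X 2 * X 3 * (X 0 * X 1) - C (N ^ 2 / 4)) := by
    simp [phiConifold, gPoly, conifoldMk, algebraMap_eq, mk_C]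
  rw [h1, conifoldMk, Ideal.Quotient.mkₐ_eq_mk, Ideal.Quotient.eq_zero_iff_mem,
    conifoldIdeal, Ideal.mem_span_singleton]
  refine ⟨C (4⁻¹ : ℂ) * (X 0 * X 3 - X 1 * X 2 + C N), ?_⟩
  have hq : (C (2⁻¹ : ℂ) : P4) * C (2⁻¹ : ℂ) = C (4⁻¹ : ℂ) := by
    rw [← C_mul]; norm_num
  have hN : (C (N ^ 2 / 4) : P4) = C (4⁻¹ : ℂ) * (C N * C N) := by
    rw [← C_mul, ← C_mul]; congr 1; ring
  rw [conifoldRel, hN]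
  linear_combination ((X 0 * X 3 + X 1 * X 2 : P4)) ^ 2 * hq
    + (X 0 * X 1 * X 2 * X 3 : P4) * C_quarter_mul

lemma eval_aeval2 (z : Fin 4 → ℂ) (v : Fin 2 → P4) (p : P2) :
    eval z (aeval v p) = eval (fun i => eval z (v i)) p := by
  induction p using MvPolynomial.induction_on with
  | C a => simp [algebraMap_eq]
  | add p q hp hq => simp only [map_add, hp, hq]
  | mul_X p i hp => simp only [map_mul, aeval_X, eval_X, hp]

lemma keyB (N : ℂ) (p₀ p₁ : P2)
    (h : phiConifold N (embA p₀ + X 0 * embA p₁) = 0) : p₀ = 0 ∧ p₁ = 0 := by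
  classical
  -- Express the hypothesis as a membership in the conifold ideal.
  have hcomp : ∀ p : P2, phiConifold N (embA p)
      = conifoldMk N (aeval ![(X 2 * X 3 : P4), X 0 * X 1] p) := by
    intro p
    have hext : (phiConifold N).comp embA
        = (conifoldMk N).comp (aeval ![(X 2 * X 3 : P4), X 0 * X 1]) := by
      apply MvPolynomial.algHom_ext
      intro i
      fin_cases i <;> simp [phiConifold, embA]
    exact DFunLike.congr_fun hext p
  have hx0 : phiConifold N (X 0)
      = conifoldMk N (C (2⁻¹ : ℂ) * (X 0 * X 3 + X 1 * X 2)) := by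
    simp [phiConifold]
  set Q : P4 := aeval ![(X 2 * X 3 : P4), X 0 * X 1] p₀
      + C (2⁻¹ : ℂ) * (X 0 * X 3 + X 1 * X 2) * aeval ![(X 2 * X 3 : P4), X 0 * X 1] p₁
    with hQdef
  have hmk : conifoldMk N Q = 0 := by
    rw [map_add, map_mul, hcomp p₀, hcomp p₁, hx0] at h
    rw [hQdef, map_add, map_mul]
    exact h
  have hmem : Q ∈ conifoldIdeal N := by
    rwa [conifoldMk, Ideal.Quotient.mkₐ_eq_mk, Ideal.Quotient.eq_zero_iff_mem] at hmk
  rw [conifoldIdeal, Ideal.mem_span_singleton] at hmem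
  obtain ⟨hquo, hfac⟩ := hmem
  -- Pointwise consequence on the conifold.
  have hz : ∀ z : Fin 4 → ℂ, eval z (conifoldRel N) = 0 →
      eval ![z 2 * z 3, z 0 * z 1] p₀
        + 2⁻¹ * (z 0 * z 3 + z 1 * z 2) * eval ![z 2 * z 3, z 0 * z 1] p₁ = 0 := by
    intro z hzr
    have hQ0 : eval z Q = 0 := by rw [hfac, map_mul, hzr, zero_mul]
    rw [hQdef, map_add, map_mul, eval_aeval2, eval_aeval2] at hQ0
    have hvec : (fun i => eval z ((![(X 2 * X 3 : P4), X 0 * X 1]) i))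
        = ![z 2 * z 3, z 0 * z 1] := by
      funext i; fin_cases i <;> simp
    rw [hvec] at hQ0
    have hcoef : eval z (C (2⁻¹ : ℂ) * (X 0 * X 3 + X 1 * X 2) : P4)
        = 2⁻¹ * (z 0 * z 3 + z 1 * z 2) := by simp
    rw [hcoef] at hQ0
    exact hQ0
  -- The two rational parametrizations of the conifold.
  have S1 : ∀ x y : ℂ, eval ![y, x * (x * y - N)] p₀
      + (x * y - N / 2) * eval ![y, x * (x * y - N)] p₁ = 0 := by
    intro x y
    have h0 := hz ![x, x * y - N, 1, y] (by simp [conifoldRel])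
    simp only [Matrix.cons_val_zero, Matrix.cons_val_one, Matrix.head_cons,
      Matrix.cons_val_two, Matrix.tail_cons, Matrix.cons_val_three, one_mul, mul_one] at h0
    linear_combination h0
  have S2 : ∀ x y : ℂ, eval ![y * (x * y + N), x] p₀
      + (x * y + N / 2) * eval ![y * (x * y + N), x] p₁ = 0 := by
    intro x y
    have h0 := hz ![1, x, y, x * y + N] (by simp [conifoldRel])
    simp only [Matrix.cons_val_zero, Matrix.cons_val_one, Matrix.head_cons,
      Matrix.cons_val_two, Matrix.tail_cons, Matrix.cons_val_three, one_mul, mul_one] at h0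
    linear_combination h0
  -- Pointwise vanishing on the quadric surface.
  have key : ∀ b c a : ℂ, a ^ 2 = b * c + N ^ 2 / 4 →
      eval ![b, c] p₀ + a * eval ![b, c] p₁ = 0 := by
    intro b c a ha
    by_cases hb : b = 0
    · by_cases hc : c = 0
      · subst hb; subst hc
        have hcase : (a - N / 2) * (a + N / 2) = 0 := by linear_combination ha
        rcases mul_eq_zero.mp hcase with hA | hA
        · have h0 := S2 0 0
          norm_num at h0
          linear_combination h0 + eval ![(0 : ℂ), (0 : ℂ)] p₁ * hA
        · have h0 := S1 0 0
          norm_num at h0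
          linear_combination h0 + eval ![(0 : ℂ), (0 : ℂ)] p₁ * hA
      · have h0 := S2 c ((a - N / 2) / c)
        have hxy : c * ((a - N / 2) / c) = a - N / 2 := by
          rw [mul_comm, div_mul_cancel₀ _ hc]
        rw [hxy] at h0
        have hbarg : ((a - N / 2) / c) * (a - N / 2 + N) = b := by
          rw [div_mul_eq_mul_div, div_eq_iff hc]
          linear_combination ha
        rw [hbarg] at h0
        linear_combination h0
    · have h0 := S1 ((a + N / 2) / b) b
      have hxy : (a + N / 2) / b * b = a + N / 2 := div_mul_cancel₀ _ hb
      rw [hxy] at h0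
      have hcarg : ((a + N / 2) / b) * (a + N / 2 - N) = c := by
        rw [div_mul_eq_mul_div, div_eq_iff hb]
        linear_combination ha
      rw [hcarg] at h0
      linear_combination h0
  have hsq : ∀ b c : ℂ, ∃ a : ℂ, a ^ 2 = b * c + N ^ 2 / 4 := fun b c =>
    IsAlgClosed.exists_pow_nat_eq (b * c + N ^ 2 / 4) (by norm_num)
  -- `p₀ = 0`.
  have hp₀ : p₀ = 0 := by
    apply MvPolynomial.funext
    intro v
    obtain ⟨a, ha⟩ := hsq (v 0) (v 1)
    have h1 := key (v 0) (v 1) a ha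
    have h2 := key (v 0) (v 1) (-a) (by linear_combination ha)
    have hv : (![v 0, v 1] : Fin 2 → ℂ) = v := by
      funext i; fin_cases i <;> rfl
    rw [hv] at h1 h2
    rw [map_zero]
    linear_combination (2⁻¹ : ℂ) * h1 + (2⁻¹ : ℂ) * h2
  -- `p₁ = 0`.
  have hG : ((X 0 * X 1 : P2) + C (N ^ 2 / 4)) * p₁ ^ 2 = 0 := by
    apply MvPolynomial.funext
    intro v
    obtain ⟨a, ha⟩ := hsq (v 0) (v 1)
    have h1 := key (v 0) (v 1) a ha
    have h2 := key (v 0) (v 1) (-a) (by linear_combination ha)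
    have hv : (![v 0, v 1] : Fin 2 → ℂ) = v := by
      funext i; fin_cases i <;> rfl
    rw [hv] at h1 h2
    have h3 : a * eval v p₁ = 0 := by
      linear_combination (2⁻¹ : ℂ) * h1 - (2⁻¹ : ℂ) * h2
    have h4 : (a * eval v p₁) ^ 2 = 0 := by rw [h3]; ring
    have h5 : eval v (((X 0 * X 1 : P2) + C (N ^ 2 / 4)) * p₁ ^ 2)
        = (v 0 * v 1 + N ^ 2 / 4) * (eval v p₁) ^ 2 := by simp
    rw [h5, map_zero]
    linear_combination h4 - (eval v p₁) ^ 2 * ha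
  have hXne : ((X 0 * X 1 : P2) + C (N ^ 2 / 4)) ≠ 0 := by
    intro hcontra
    have h6 := congrArg (eval ![(1 : ℂ), 1 - N ^ 2 / 4]) hcontra
    rw [map_zero] at h6
    simp only [map_add, map_mul, eval_X, eval_C, Matrix.cons_val_zero, Matrix.cons_val_one,
      Matrix.head_cons] at h6
    exact one_ne_zero (α := ℂ) (by linear_combination h6)
  have hp₁ : p₁ = 0 := by
    rcases mul_eq_zero.mp hG with h' | h'
    · exact absurd h' hXne
    · exact pow_eq_zero_iff (two_ne_zero) |>.mp h'
  exact ⟨hp₀, hp₁⟩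

/-! ### Part (ii): invariants -/

def quadSet : Set P4 := {X 0 * X 1, X 0 * X 3, X 2 * X 1, X 2 * X 3}

lemma prod_mem_quad : ∀ (n a b c d : ℕ), a + b + c + d = n → a + c = b + d →
    (X 0 ^ a * X 1 ^ b * X 2 ^ c * X 3 ^ d : P4) ∈ Algebra.adjoin ℂ quadSet := by
  intro n
  induction n using Nat.strong_induction_on with
  | _ n ih =>
    intro a b c d hsum hbal
    by_cases hn : n = 0
    · subst hn
      have ha : a = 0 := by omega
      have hb : b = 0 := by omega
      have hc : c = 0 := by omega
      have hd : d = 0 := by omega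
      subst ha; subst hb; subst hc; subst hd
      simpa using one_mem (Algebra.adjoin ℂ quadSet)
    · have hac : 0 < a + c := by omega
      have hbd : 0 < b + d := by omega
      by_cases hA : 0 < a
      · by_cases hB : 0 < b
        · obtain ⟨a', rfl⟩ : ∃ a', a = a' + 1 := ⟨a - 1, by omega⟩
          obtain ⟨b', rfl⟩ : ∃ b', b = b' + 1 := ⟨b - 1, by omega⟩
          have hfac : (X 0 ^ (a' + 1) * X 1 ^ (b' + 1) * X 2 ^ c * X 3 ^ d : P4)
              = (X 0 * X 1) * (X 0 ^ a' * X 1 ^ b' * X 2 ^ c * X 3 ^ d) := by ring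
          rw [hfac]
          exact mul_mem (Algebra.subset_adjoin (by simp [quadSet]))
            (ih (a' + b' + c + d) (by omega) a' b' c d rfl (by omega))
        · obtain ⟨a', rfl⟩ : ∃ a', a = a' + 1 := ⟨a - 1, by omega⟩
          obtain ⟨d', rfl⟩ : ∃ d', d = d' + 1 := ⟨d - 1, by omega⟩
          have hfac : (X 0 ^ (a' + 1) * X 1 ^ b * X 2 ^ c * X 3 ^ (d' + 1) : P4)
              = (X 0 * X 3) * (X 0 ^ a' * X 1 ^ b * X 2 ^ c * X 3 ^ d') := by ring
          rw [hfac]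
          exact mul_mem (Algebra.subset_adjoin (by simp [quadSet]))
            (ih (a' + b + c + d') (by omega) a' b c d' rfl (by omega))
      · by_cases hB : 0 < b
        · obtain ⟨c', rfl⟩ : ∃ c', c = c' + 1 := ⟨c - 1, by omega⟩
          obtain ⟨b', rfl⟩ : ∃ b', b = b' + 1 := ⟨b - 1, by omega⟩
          have hfac : (X 0 ^ a * X 1 ^ (b' + 1) * X 2 ^ (c' + 1) * X 3 ^ d : P4)
              = (X 2 * X 1) * (X 0 ^ a * X 1 ^ b' * X 2 ^ c' * X 3 ^ d) := by ring
          rw [hfac]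
          exact mul_mem (Algebra.subset_adjoin (by simp [quadSet]))
            (ih (a + b' + c' + d) (by omega) a b' c' d rfl (by omega))
        · obtain ⟨c', rfl⟩ : ∃ c', c = c' + 1 := ⟨c - 1, by omega⟩
          obtain ⟨d', rfl⟩ : ∃ d', d = d' + 1 := ⟨d - 1, by omega⟩
          have hfac : (X 0 ^ a * X 1 ^ b * X 2 ^ (c' + 1) * X 3 ^ (d' + 1) : P4)
              = (X 2 * X 3) * (X 0 ^ a * X 1 ^ b * X 2 ^ c' * X 3 ^ d') := by ring
          rw [hfac]
          exact mul_mem (Algebra.subset_adjoin (by simp [quadSet]))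
            (ih (a + b + c' + d') (by omega) a b c' d' rfl (by omega))

lemma monomial_zero_mem (m : Fin 4 →₀ ℕ) (hw : Finsupp.weight wgt m = 0) :
    (monomial m (1 : ℂ) : P4) ∈ Algebra.adjoin ℂ quadSet := by
  have hmon : (monomial m (1 : ℂ) : P4)
      = X 0 ^ m 0 * X 1 ^ m 1 * X 2 ^ m 2 * X 3 ^ m 3 := by
    rw [monomial_eq, C_1, one_mul,
      Finsupp.prod_fintype _ _ (fun i => pow_zero _), Fin.prod_univ_four]
  rw [hmon]
  have hw' := weight_eq m
  rw [hw] at hw'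
  exact prod_mem_quad (m 0 + m 1 + m 2 + m 3) _ _ _ _ rfl (by omega)

lemma homog_zero_mem {q : P4} (h : IsWeightedHomogeneous wgt q 0) :
    q ∈ Algebra.adjoin ℂ quadSet := by
  have hq : q = ∑ m ∈ q.support, monomial m (coeff m q) := q.as_sum
  rw [hq]
  apply sum_mem
  intro m hm
  have hmon : (monomial m (coeff m q) : P4) = C (coeff m q) * monomial m 1 := by
    rw [C_mul_monomial, mul_one]
  rw [hmon]
  refine mul_mem ?_ (monomial_zero_mem m (h (mem_support_iff.mp hm)))
  have := Subalgebra.algebraMap_mem (Algebra.adjoin ℂ quadSet) (coeff m q)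
  rwa [algebraMap_eq] at this

lemma sigma_mk (N : ℂ) (t : ℂˣ) (q : P4) :
    sigmaScale N t (conifoldMk N q) = conifoldMk N (tauScale t q) := by
  simp [sigmaScale, conifoldMk, Ideal.Quotient.mkₐ_eq_mk, Ideal.Quotient.liftₐ_apply,
    Ideal.Quotient.lift_mk]
  rfl

lemma tau_fix_A (t : ℂˣ) :
    tauScale t (C (2⁻¹ : ℂ) * (X 0 * X 3 + X 1 * X 2)) 
      = (C (2⁻¹ : ℂ) * (X 0 * X 3 + X 1 * X 2) : P4) := by
  have h : (C ((t : ℂ)) * C (((t⁻¹ : ℂˣ) : ℂ)) : P4) = 1 := by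
    rw [← C_mul, Units.mul_inv, C_1]
  simp only [tauScale, map_mul, map_add, aeval_X, aeval_C, algebraMap_eq,
    Matrix.cons_val_zero, Matrix.cons_val_one, Matrix.head_cons, Matrix.cons_val_two,
    Matrix.tail_cons, Matrix.cons_val_three]
  linear_combination (C (2⁻¹ : ℂ) * (X 0 * X 3 + X 1 * X 2) : P4) * h

lemma tau_fix_B (t : ℂˣ) : tauScale t (X 2 * X 3) = (X 2 * X 3 : P4) := by
  have h : (C ((t : ℂ)) * C (((t⁻¹ : ℂˣ) : ℂ)) : P4) = 1 := by
    rw [← C_mul, Units.mul_inv, C_1]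
  simp only [tauScale, map_mul, aeval_X, Matrix.cons_val_zero, Matrix.cons_val_one,
    Matrix.head_cons, Matrix.cons_val_two, Matrix.tail_cons, Matrix.cons_val_three]
  linear_combination (X 2 * X 3 : P4) * h

lemma tau_fix_C (t : ℂˣ) : tauScale t (X 0 * X 1) = (X 0 * X 1 : P4) := by
  have h : (C ((t : ℂ)) * C (((t⁻¹ : ℂˣ) : ℂ)) : P4) = 1 := by
    rw [← C_mul, Units.mul_inv, C_1]
  simp only [tauScale, map_mul, aeval_X, Matrix.cons_val_zero, Matrix.cons_val_one,
    Matrix.head_cons, Matrix.cons_val_two, Matrix.tail_cons, Matrix.cons_val_three]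
  linear_combination (X 0 * X 1 : P4) * h

lemma mk_X0X3 (N : ℂ) :
    conifoldMk N (X 0 * X 3) = phiConifold N (X 0 + C (N / 2)) := by
  have h1 : phiConifold N (X 0 + C (N / 2))
      = conifoldMk N (C (2⁻¹ : ℂ) * (X 0 * X 3 + X 1 * X 2) + C (N / 2)) := by
    simp [phiConifold, conifoldMk, algebraMap_eq, mk_C]
  rw [h1, conifoldMk, Ideal.Quotient.mkₐ_eq_mk, Ideal.Quotient.eq, conifoldIdeal,
    Ideal.mem_span_singleton]
  refine ⟨C (2⁻¹ : ℂ), ?_⟩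
  have hk : (C (N / 2) : P4) = C (2⁻¹ : ℂ) * C N := by rw [← C_mul]; congr 1; ring
  rw [conifoldRel, hk]
  linear_combination (-(X 0 * X 3 : P4)) * C_half_mul

lemma range_phi_quad (N : ℂ) :
    (conifoldMk N) '' quadSet ⊆ Set.range (phiConifold N) := by
  rintro y ⟨q, hq, rfl⟩
  rcases hq with h | h | h | h
  · subst h; exact ⟨X 2, by simp [phiConifold]⟩
  · subst h; exact ⟨X 0 + C (N / 2), (mk_X0X3 N).symm⟩
  · subst h
    -- u₂w₁ = u₁w₂ − N
    refine ⟨X 0 - C (N / 2), ?_⟩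
    have h1 : phiConifold N (X 0 - C (N / 2))
        = conifoldMk N (C (2⁻¹ : ℂ) * (X 0 * X 3 + X 1 * X 2) - C (N / 2)) := by
      simp [phiConifold, conifoldMk, algebraMap_eq, mk_C]
    rw [h1, conifoldMk, Ideal.Quotient.mkₐ_eq_mk, Ideal.Quotient.eq, conifoldIdeal,
      Ideal.mem_span_singleton]
    refine ⟨C (2⁻¹ : ℂ), ?_⟩
    have hk : (C (N / 2) : P4) = C (2⁻¹ : ℂ) * C N := by rw [← C_mul]; congr 1; ring
    rw [conifoldRel, hk]
    linear_combination ((X 1 * X 2 : P4)) * C_half_mul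
  · subst h; exact ⟨X 1, by simp [phiConifold]⟩

end ConifoldAux

open ConifoldAux in
/-- For the map `φ : ℂ[A, B, C] → R = ℂ[u₁,u₂,w₁,w₂]/(u₁w₂ − u₂w₁ − N)` with
`φ(A) = (u₁w₂ + u₂w₁)/2`, `φ(B) = w₁w₂`, `φ(C) = u₁u₂`:
(i) the kernel of `φ` is the principal ideal generated by `A² − BC − N²/4`, and
(ii) the image of `φ` is exactly the set of elements of `R` fixed by every rescaling
automorphism `σ_t`, `t ∈ ℂˣ`. -/
theorem conifold_quotient_presentation (N : ℂ) :
    RingHom.ker (phiConifold N : MvPolynomial (Fin 3) ℂ →+* ConifoldRing N) =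
      Ideal.span {(X 0 : MvPolynomial (Fin 3) ℂ) ^ 2 - X 1 * X 2 - C (N ^ 2 / 4)} ∧
    Set.range (phiConifold N) = {x : ConifoldRing N | ∀ t : ℂˣ, sigmaScale N t x = x} := by
  constructor
  · -- Part (i): kernel computation.
    have hgspan : ((X 0 : P3) ^ 2 - X 1 * X 2 - C (N ^ 2 / 4)) = gPoly N := rfl
    rw [hgspan]
    apply le_antisymm
    · intro p hp
      rw [RingHom.mem_ker] at hp
      have hp' : phiConifold N p = 0 := hp
      obtain ⟨p0, p1, hmem⟩ := normal_form N p
      have hspan_le : Ideal.span {gPoly N}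
          ≤ RingHom.ker (phiConifold N : P3 →+* ConifoldRing N) := by
        rw [Ideal.span_le, Set.singleton_subset_iff]
        have : gPoly N ∈ RingHom.ker (phiConifold N : P3 →+* ConifoldRing N) := by
          rw [RingHom.mem_ker]
          exact phi_g N
        exact this
      have hE0 : phiConifold N (embA p0 + X 0 * embA p1) = 0 := by
        have h1 : phiConifold N (p - (embA p0 + X 0 * embA p1)) = 0 := hspan_le hmem
        rw [map_sub, hp', zero_sub, neg_eq_zero] at h1
        exact h1
      obtain ⟨h0, h1⟩ := keyB N p0 p1 hE0
      subst h0; subst h1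
      simpa using hmem
    · rw [Ideal.span_le, Set.singleton_subset_iff]
      have : gPoly N ∈ RingHom.ker (phiConifold N : P3 →+* ConifoldRing N) := by
        rw [RingHom.mem_ker]
        exact phi_g N
      exact this
  · -- Part (ii): invariants.
    ext x
    simp only [Set.mem_range, Set.mem_setOf_eq]
    constructor
    · rintro ⟨q, rfl⟩ t
      have hext : (sigmaScale N t).comp (phiConifold N) = phiConifold N := by
        apply MvPolynomial.algHom_ext
        intro i
        fin_cases i
        · show sigmaScale N t (phiConifold N (X 0)) = phiConifold N (X 0)
          have hX : phiConifold N (X 0)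
              = conifoldMk N (C (2⁻¹ : ℂ) * (X 0 * X 3 + X 1 * X 2)) := by
            simp [phiConifold]
          rw [hX, sigma_mk, tau_fix_A]
        · show sigmaScale N t (phiConifold N (X 1)) = phiConifold N (X 1)
          have hX : phiConifold N (X 1) = conifoldMk N (X 2 * X 3) := by
            simp [phiConifold]
          rw [hX, sigma_mk, tau_fix_B]
        · show sigmaScale N t (phiConifold N (X 2)) = phiConifold N (X 2)
          have hX : phiConifold N (X 2) = conifoldMk N (X 0 * X 1) := by
            simp [phiConifold]
          rw [hX, sigma_mk, tau_fix_C]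
      exact DFunLike.congr_fun hext q
    · intro hfix
      obtain ⟨p, rfl⟩ := Ideal.Quotient.mk_surjective x
      have hdiff : ∀ t : ℂˣ, tauScale t p - p ∈ conifoldIdeal N := by
        intro t
        have h1 := hfix t
        have h2 : conifoldMk N (tauScale t p) = conifoldMk N p := by
          rw [← sigma_mk]
          simpa [conifoldMk, Ideal.Quotient.mkₐ_eq_mk] using h1
        rwa [conifoldMk, Ideal.Quotient.mkₐ_eq_mk, Ideal.Quotient.eq] at h2
      have hcomp0 : ∀ d : ℤ, d ≠ 0 →
          weightedHomogeneousComponent wgt d p ∈ conifoldIdeal N := by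
        intro d hd
        set t2 : ℂˣ := Units.mk0 (2 : ℂ) two_ne_zero with ht2
        have h1 := comp_mem_ideal N (hdiff t2) d
        rw [map_sub, comp_tauScale] at h1
        have h2 : (C (((t2 ^ d : ℂˣ) : ℂ)) - 1)
            * weightedHomogeneousComponent wgt d p ∈ conifoldIdeal N := by
          have heq : (C (((t2 ^ d : ℂˣ) : ℂ)) - 1)
              * weightedHomogeneousComponent wgt d p
              = C (((t2 ^ d : ℂˣ) : ℂ)) * weightedHomogeneousComponent wgt d p
                - weightedHomogeneousComponent wgt d p := by ring
          rw [heq]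
          exact h1
        have hc : (((t2 ^ d : ℂˣ) : ℂ)) - 1 ≠ 0 := by
          intro hcc
          exact two_zpow_ne_one hd (Units.ext (by simpa [ht2] using sub_eq_zero.mp hcc))
        have hCsub : (C ((((t2 ^ d : ℂˣ) : ℂ)) - 1) : P4)
            = C (((t2 ^ d : ℂˣ) : ℂ)) - 1 := by
          rw [map_sub, C_1]
        have hCinv : (C (((((t2 ^ d : ℂˣ) : ℂ)) - 1)⁻¹) : P4)
            * (C (((t2 ^ d : ℂˣ) : ℂ)) - 1) = 1 := by
          rw [← hCsub, ← C_mul, inv_mul_cancel₀ hc, C_1]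
        have hrw : weightedHomogeneousComponent wgt d p
            = C (((((t2 ^ d : ℂˣ) : ℂ)) - 1)⁻¹)
              * ((C (((t2 ^ d : ℂˣ) : ℂ)) - 1) * weightedHomogeneousComponent wgt d p) := by
          rw [← mul_assoc, hCinv, one_mul]
        rw [hrw]
        exact Ideal.mul_mem_left _ _ h2
      have hfin := weightedHomogeneousComponent_finsupp (w := wgt) (φ := p)
      have hp : p = ∑ e ∈ hfin.toFinset, weightedHomogeneousComponent wgt e p := by
        rw [← finsum_eq_sum _ hfin, sum_weightedHomogeneousComponent]
      have hrem : p - weightedHomogeneousComponent wgt 0 p ∈ conifoldIdeal N := by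
        have hform : p - weightedHomogeneousComponent wgt 0 p
            = ∑ e ∈ hfin.toFinset.erase 0, weightedHomogeneousComponent wgt e p := by
          by_cases h0 : (0 : ℤ) ∈ hfin.toFinset
          · have h2 := hp
            rw [← Finset.add_sum_erase _ _ h0] at h2
            linear_combination h2
          · have hz0 : weightedHomogeneousComponent wgt 0 p = 0 := by
              by_contra hne
              exact h0 (hfin.mem_toFinset.mpr hne)
            rw [hz0, sub_zero, Finset.erase_eq_of_notMem h0]
            exact hp
        rw [hform]
        exact Ideal.sum_mem _ (fun e he => hcomp0 e (Finset.ne_of_mem_erase he))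
      have hx0 : Ideal.Quotient.mk (conifoldIdeal N) p
          = conifoldMk N (weightedHomogeneousComponent wgt 0 p) := by
        rw [conifoldMk, Ideal.Quotient.mkₐ_eq_mk, Ideal.Quotient.eq]
        exact hrem
      rw [hx0]
      have hadj := homog_zero_mem
        (weightedHomogeneousComponent_isWeightedHomogeneous (w := wgt) 0 p)
      have hmapped : conifoldMk N (weightedHomogeneousComponent wgt 0 p)
          ∈ (Algebra.adjoin ℂ quadSet).map (conifoldMk N) := ⟨_, hadj, rfl⟩
      rw [AlgHom.map_adjoin] at hmapped
      have hle : Algebra.adjoin ℂ ((conifoldMk N) '' quadSet)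
          ≤ ((phiConifold N).range : Subalgebra ℂ (ConifoldRing N)) :=
        Algebra.adjoin_le (fun y hy => (AlgHom.mem_range _).mpr (range_phi_quad N hy))
      have hmem := hle hmapped
      rwa [AlgHom.mem_range] at hmem
end
end
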